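/- For any integer n with |n| > 6, the Laurent polynomial f(t) = (-t)^n · ((t^{-2} - t^{-1} + 1 - t + t^2)^2 - 1) + 1 in ℤ[t, t^{-1}] has a gap of length greater than one; that is, there exist two consecutive integers k, k+1, strictly between the minimal and maximal degrees of nonzero coefficients of f, such that the coefficients of t^k and t^{k+1} in f are both zero. -/

import Mathlib

open LaurentPolynomial Finsupp

lemma exp1 :
    ((T (-2) - T (-1) + 1 - T 1 + T 2 : LaurentPolynomial ℤ)^2 - 1) =
    T (-4) - 2*T (-3) + 3*T (-2) - 4*T (-1) + 4 - 4*T 1 + 3*T 2 - 2*T 3 + T 4 := by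
  have e : ∀ a b : ℤ, (T a * T b : LaurentPolynomial ℤ) = T (a+b) := fun a b => (T_add a b).symm
  ring_nf
  simp only [T_pow, e]
  norm_num
  ring

lemma exp2 (n ε : ℤ) :
    (C ε) * T n * ((T (-2) - T (-1) + 1 - T 1 + T 2 : LaurentPolynomial ℤ)^2 - 1) + 1 =
    AddMonoidAlgebra.single (n + -4) ε + AddMonoidAlgebra.single (n + -3) (-2*ε) + AddMonoidAlgebra.single (n + -2) (3*ε)
    + AddMonoidAlgebra.single (n + -1) (-4*ε) + AddMonoidAlgebra.single (n + 0) (4*ε) + AddMonoidAlgebra.single (n + 1) (-4*ε)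
    + AddMonoidAlgebra.single (n + 2) (3*ε) + AddMonoidAlgebra.single (n + 3) (-2*ε) + AddMonoidAlgebra.single (n + 4) ε
    + AddMonoidAlgebra.single 0 (1:ℤ) := by
  rw [exp1]
  simp only [single_eq_C_mul_T, T_add, T_zero, map_mul, map_neg, map_ofNat, map_one]
  ring

theorem kanenobu_jones_gap (n : ℤ) (hn : 6 < |n|) :
    let g : LaurentPolynomial ℤ := T (-2) - T (-1) + 1 - T 1 + T 2
    let f : LaurentPolynomial ℤ :=
      (C ((-1 : ℤ) ^ n.natAbs)) * T n * (g ^ 2 - 1) + 1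
    ∃ k : ℤ, f.coeff k = 0 ∧ f.coeff (k + 1) = 0 ∧
      (∃ a ∈ f.coeff.support, a < k) ∧ (∃ b ∈ f.coeff.support, k + 1 < b) := by
  intro g f
  set ε : ℤ := (-1 : ℤ) ^ n.natAbs with hεdef
  have hε : ε ≠ 0 := pow_ne_zero _ (by norm_num)
  have hadd : ∀ (p q : LaurentPolynomial ℤ) (m : ℤ), (p + q).coeff m = p.coeff m + q.coeff m := fun _ _ _ => rfl
  have hf : f = AddMonoidAlgebra.single (n + -4) ε + AddMonoidAlgebra.single (n + -3) (-2*ε)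
      + AddMonoidAlgebra.single (n + -2) (3*ε) + AddMonoidAlgebra.single (n + -1) (-4*ε)
      + AddMonoidAlgebra.single (n + 0) (4*ε) + AddMonoidAlgebra.single (n + 1) (-4*ε)
      + AddMonoidAlgebra.single (n + 2) (3*ε) + AddMonoidAlgebra.single (n + 3) (-2*ε)
      + AddMonoidAlgebra.single (n + 4) ε + AddMonoidAlgebra.single 0 (1:ℤ) := exp2 n ε
  have coeff : ∀ m : ℤ, f.coeff m =
      (if n + -4 = m then ε else 0) + (if n + -3 = m then -2*ε else 0)
      + (if n + -2 = m then 3*ε else 0) + (if n + -1 = m then -4*ε else 0)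
      + (if n + 0 = m then 4*ε else 0) + (if n + 1 = m then -4*ε else 0)
      + (if n + 2 = m then 3*ε else 0) + (if n + 3 = m then -2*ε else 0)
      + (if n + 4 = m then ε else 0) + (if (0:ℤ) = m then 1 else 0) := by
    intro m
    rw [hf]
    simp only [hadd, AddMonoidAlgebra.coeff_single, Finsupp.single_apply]
  rcases le_or_gt 0 n with hpos | hneg
  · have h7 : 7 ≤ n := by rw [abs_of_nonneg hpos] at hn; omega
    refine ⟨1, ?_, ?_, ⟨0, ?_, by norm_num⟩, ⟨n - 4, ?_, by omega⟩⟩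
    · rw [coeff]
      simp [show n + -4 ≠ (1:ℤ) by omega, show n + -3 ≠ (1:ℤ) by omega,
        show n + -2 ≠ (1:ℤ) by omega, show n + -1 ≠ (1:ℤ) by omega,
        show n + 0 ≠ (1:ℤ) by omega, show n ≠ (1:ℤ) by omega, show n + 1 ≠ (1:ℤ) by omega,
        show n + 2 ≠ (1:ℤ) by omega, show n + 3 ≠ (1:ℤ) by omega,
        show n + 4 ≠ (1:ℤ) by omega]
    · rw [coeff]
      simp [show n + -4 ≠ (2:ℤ) by omega, show n + -3 ≠ (2:ℤ) by omega,
        show n + -2 ≠ (2:ℤ) by omega, show n + -1 ≠ (2:ℤ) by omega,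
        show n + 0 ≠ (2:ℤ) by omega, show n ≠ (2:ℤ) by omega, show n + 1 ≠ (2:ℤ) by omega,
        show n + 2 ≠ (2:ℤ) by omega, show n + 3 ≠ (2:ℤ) by omega,
        show n + 4 ≠ (2:ℤ) by omega]
    · rw [Finsupp.mem_support_iff, coeff]
      simp [show n + -4 ≠ (0:ℤ) by omega, show n + -3 ≠ (0:ℤ) by omega,
        show n + -2 ≠ (0:ℤ) by omega, show n + -1 ≠ (0:ℤ) by omega,
        show n + 0 ≠ (0:ℤ) by omega, show n ≠ (0:ℤ) by omega, show n + 1 ≠ (0:ℤ) by omega,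
        show n + 2 ≠ (0:ℤ) by omega, show n + 3 ≠ (0:ℤ) by omega,
        show n + 4 ≠ (0:ℤ) by omega]
    · rw [Finsupp.mem_support_iff, coeff]
      simpa [show n + -4 = n - 4 by ring, show n + -3 ≠ n - 4 by omega,
        show n + -2 ≠ n - 4 by omega, show n + -1 ≠ n - 4 by omega,
        show n + 0 ≠ n - 4 by omega, show n ≠ n - 4 by omega, show n + 1 ≠ n - 4 by omega,
        show n + 2 ≠ n - 4 by omega, show n + 3 ≠ n - 4 by omega,
        show n + 4 ≠ n - 4 by omega, show (0:ℤ) ≠ n - 4 by omega] using hε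
  · have h7 : n ≤ -7 := by rw [abs_of_neg hneg] at hn; omega
    refine ⟨-2, ?_, ?_, ⟨n + 4, ?_, by omega⟩, ⟨0, ?_, by norm_num⟩⟩
    · rw [coeff]
      simp [show n + -4 ≠ (-2:ℤ) by omega, show n + -3 ≠ (-2:ℤ) by omega,
        show n + -2 ≠ (-2:ℤ) by omega, show n + -1 ≠ (-2:ℤ) by omega,
        show n + 0 ≠ (-2:ℤ) by omega, show n ≠ (-2:ℤ) by omega, show n + 1 ≠ (-2:ℤ) by omega,
        show n + 2 ≠ (-2:ℤ) by omega, show n + 3 ≠ (-2:ℤ) by omega,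
        show n + 4 ≠ (-2:ℤ) by omega, show (0:ℤ) ≠ (-2:ℤ) by omega]
    · rw [coeff]
      norm_num
      simp [show n + -4 ≠ (-1:ℤ) by omega, show n + -3 ≠ (-1:ℤ) by omega,
        show n + -2 ≠ (-1:ℤ) by omega, show n + -1 ≠ (-1:ℤ) by omega,
        show n + 0 ≠ (-1:ℤ) by omega, show n ≠ (-1:ℤ) by omega, show n + 1 ≠ (-1:ℤ) by omega,
        show n + 2 ≠ (-1:ℤ) by omega, show n + 3 ≠ (-1:ℤ) by omega,
        show n + 4 ≠ (-1:ℤ) by omega, show n ≠ (0:ℤ) by omega, show (0:ℤ) ≠ (-1:ℤ) by omega]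
    · rw [Finsupp.mem_support_iff, coeff]
      simpa [show n + -4 ≠ n + 4 by omega, show n + -3 ≠ n + 4 by omega,
        show n + -2 ≠ n + 4 by omega, show n + -1 ≠ n + 4 by omega,
        show n + 0 ≠ n + 4 by omega, show n ≠ n + 4 by omega, show n + 1 ≠ n + 4 by omega,
        show n + 2 ≠ n + 4 by omega, show n + 3 ≠ n + 4 by omega,
        show (0:ℤ) ≠ n + 4 by omega] using hε
    · rw [Finsupp.mem_support_iff, coeff]
      simp [show n + -4 ≠ (0:ℤ) by omega, show n + -3 ≠ (0:ℤ) by omega,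
        show n + -2 ≠ (0:ℤ) by omega, show n + -1 ≠ (0:ℤ) by omega,
        show n + 0 ≠ (0:ℤ) by omega, show n ≠ (0:ℤ) by omega, show n + 1 ≠ (0:ℤ) by omega,
        show n + 2 ≠ (0:ℤ) by omega, show n + 3 ≠ (0:ℤ) by omega,
        show n + 4 ≠ (0:ℤ) by omega]
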